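/- The polynomial eq_1 = (1 + i√7) U_1 U_2 U_3 + (3 + i√7) U_4 U_5 U_6 + 8 (U_1^2 U_5 + U_2^2 U_6 + U_3^2 U_4) is invariant under both g7 and g3, i.e., eq_1 ∘ g7 = eq_1 and eq_1 ∘ g3 = eq_1. -/

import Mathlib

open Complex

noncomputable def xi : ℂ := Complex.exp (2 * Real.pi * Complex.I / 7)

def w7 : Fin 10 → ℕ := ![0, 6, 5, 3, 1, 2, 4, 1, 2, 4]

noncomputable def g7 : (Fin 10 → ℂ) → (Fin 10 → ℂ) := fun u i => xi ^ w7 i * u i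

def tau : Fin 10 → Fin 10 := ![0, 2, 3, 1, 5, 6, 4, 8, 9, 7]

def g3 : (Fin 10 → ℂ) → (Fin 10 → ℂ) := fun u i => u (tau i)

/-- The cubic `eq₁`. -/
noncomputable def eq1 : (Fin 10 → ℂ) → ℂ := fun u =>
  (1 + Complex.I * Real.sqrt 7) * (u 1 * u 2 * u 3) +
  (3 + Complex.I * Real.sqrt 7) * (u 4 * u 5 * u 6) +
  8 * ((u 1) ^ 2 * u 5 + (u 2) ^ 2 * u 6 + (u 3) ^ 2 * u 4)

lemma xi_pow_seven : xi ^ 7 = 1 := by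
  rw [xi, ← Complex.exp_nat_mul]
  rw [show ((7:ℕ):ℂ) * (2 * Real.pi * Complex.I / 7) = 2 * Real.pi * Complex.I by push_cast; ring]
  exact Complex.exp_two_pi_mul_I

/-- `eq₁` is invariant under both `g7` and `g3`. -/
theorem eq1_invariant : (∀ u, eq1 (g7 u) = eq1 u) ∧ (∀ u, eq1 (g3 u) = eq1 u) := by
  constructor
  · intro u
    simp only [eq1, g7, w7]
    norm_num [Matrix.cons_val_one, Matrix.head_cons]
    rw [show (![0, 6, 5, 3, 1, 2, 4, 1, 2, 4] : Fin 10 → ℕ) 5 = 2 from rfl,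
        show (![0, 6, 5, 3, 1, 2, 4, 1, 2, 4] : Fin 10 → ℕ) 6 = 4 from rfl,
        show (![0, 6, 5, 3, 1, 2, 4, 1, 2, 4] : Fin 10 → ℕ) 2 = 5 from rfl,
        show (![0, 6, 5, 3, 1, 2, 4, 1, 2, 4] : Fin 10 → ℕ) 3 = 3 from rfl,
        show (![0, 6, 5, 3, 1, 2, 4, 1, 2, 4] : Fin 10 → ℕ) 4 = 1 from rfl]
    linear_combination ((1 + Complex.I * Real.sqrt 7) * (u 1 * u 2 * u 3) * (xi ^ 7 + 1) +
      8 * (u 1 ^ 2 * u 5) * (xi ^ 7 + 1) + 8 * (u 2 ^ 2 * u 6) * (xi ^ 7 + 1) +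
      (3 + Complex.I * Real.sqrt 7) * (u 4 * u 5 * u 6) + 8 * (u 3 ^ 2 * u 4)) * xi_pow_seven
  · intro u
    simp only [eq1, g3, tau]
    norm_num [Matrix.cons_val_one, Matrix.head_cons]
    rw [show (![0, 2, 3, 1, 5, 6, 4, 8, 9, 7] : Fin 10 → Fin 10) 5 = 6 from rfl,
        show (![0, 2, 3, 1, 5, 6, 4, 8, 9, 7] : Fin 10 → Fin 10) 6 = 4 from rfl,
        show (![0, 2, 3, 1, 5, 6, 4, 8, 9, 7] : Fin 10 → Fin 10) 2 = 3 from rfl,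
        show (![0, 2, 3, 1, 5, 6, 4, 8, 9, 7] : Fin 10 → Fin 10) 3 = 1 from rfl,
        show (![0, 2, 3, 1, 5, 6, 4, 8, 9, 7] : Fin 10 → Fin 10) 4 = 5 from rfl]
    ring
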